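/- Let V be a finite-dimensional ℂ-vector space and 𝒜 ⊆ End_ℂ(V) a commutative subalgebra. Then 𝒜 is a semisimple ring if and only if the action of 𝒜 on V is semisimple, i.e., V is a direct sum of one-dimensional 𝒜-submodules (equivalently, there is a basis of V with respect to which every element of 𝒜 is a diagonal matrix). -/

import Mathlib

set_option maxHeartbeats 1000000
set_option synthInstance.maxHeartbeats 400000
set_option maxSynthPendingDepth 2

theorem aux_isReduced_of_semisimple {R : Type*} [CommRing R] [IsSemisimpleRing R] :
    IsReduced R := by
  constructor
  intro a ha
  obtain ⟨e, he, hspan⟩ := IsSemisimpleRing.ideal_eq_span_idempotent (Ideal.span {a})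
  have hea : e ∈ Ideal.span ({a} : Set R) := by rw [hspan]; exact Ideal.subset_span rfl
  obtain ⟨x, hx⟩ := Ideal.mem_span_singleton'.mp hea
  have hen : IsNilpotent e := hx ▸ (Commute.all x a).isNilpotent_mul_left ha
  have he0 : e = 0 := he.eq_zero_of_isNilpotent hen
  have : a ∈ Ideal.span ({e} : Set R) := hspan ▸ Ideal.subset_span rfl
  obtain ⟨y, hy⟩ := Ideal.mem_span_singleton'.mp this
  rw [← hy, he0, mul_zero]

/-- for a finite-dimensional complex vector space `V` and a commutative
subalgebra `𝒜 ⊆ End_ℂ(V)`, `𝒜` is a semisimple ring if and only if the action of `𝒜`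
on `V` is semisimple, i.e. `V` has a basis with respect to which every element of `𝒜`
is diagonal (a basis of simultaneous eigenvectors). -/
theorem semisimple_ring_iff_semisimple_action {V : Type*} [AddCommGroup V] [Module ℂ V]
    [FiniteDimensional ℂ V] (𝒜 : Subalgebra ℂ (Module.End ℂ V))
    (hcomm : ∀ A B : Module.End ℂ V, A ∈ 𝒜 → B ∈ 𝒜 → A * B = B * A) :
    IsSemisimpleRing 𝒜 ↔
      ∃ B : Module.Basis (Fin (Module.finrank ℂ V)) ℂ V,
        ∀ q, ∀ A ∈ 𝒜, ∃ c : ℂ, A (B q) = c • B q := by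
  haveI hfd : FiniteDimensional ℂ 𝒜 := inferInstance
  letI : CommRing 𝒜 :=
    { (inferInstance : Ring 𝒜) with
      mul_comm := fun a b => Subtype.ext (hcomm a.1 b.1 a.2 b.2) }
  constructor
  · intro hss
    haveI : IsReduced 𝒜 := aux_isReduced_of_semisimple
    -- every element of 𝒜 is a semisimple endomorphism
    have hsemi : ∀ a : 𝒜, (a : Module.End ℂ V).IsSemisimple := by
      intro a
      have hint : IsIntegral ℂ a := IsIntegral.of_finite ℂ a
      have hsf : Squarefree (minpoly ℂ a) :=
        (minpoly.isRadical ℂ a).squarefree (minpoly.ne_zero hint)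
      have hev : Polynomial.aeval (a : Module.End ℂ V) (minpoly ℂ a) = 0 := by
        rw [show ((a : Module.End ℂ V)) = 𝒜.val a from rfl,
          Polynomial.aeval_algHom_apply, minpoly.aeval, map_zero]
      exact Module.End.isSemisimple_of_squarefree_aeval_eq_zero hsf hev
    -- simultaneous eigenspace decomposition
    have key : ⨆ χ : 𝒜 → ℂ, ⨅ a : 𝒜, (a : Module.End ℂ V).eigenspace (χ a) = ⊤ := by
      have h := Module.End.iSup_iInf_maxGenEigenspace_eq_top_of_iSup_maxGenEigenspace_eq_top_of_commute
        (fun a : 𝒜 => (a : Module.End ℂ V))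
        (fun a b _ => by
          simpa [Commute, SemiconjBy] using hcomm a.1 b.1 a.2 b.2)
        (fun a => Module.End.iSup_maxGenEigenspace_eq_top _)
      have heq : ∀ (a : 𝒜) (μ : ℂ),
          (a : Module.End ℂ V).maxGenEigenspace μ = (a : Module.End ℂ V).eigenspace μ :=
        fun a μ => ((hsemi a).isFinitelySemisimple).maxGenEigenspace_eq_eigenspace μ
      simpa only [heq] using h
    -- the set of simultaneous eigenvectors spans V
    set S : Set V := {v : V | ∀ A ∈ 𝒜, ∃ c : ℂ, A v = c • v} with hS
    have hspan : Submodule.span ℂ S = ⊤ := by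
      rw [eq_top_iff, ← key]
      refine iSup_le fun χ => ?_
      refine fun v hv => Submodule.subset_span ?_
      intro A hA
      refine ⟨χ ⟨A, hA⟩, ?_⟩
      have := (Submodule.mem_iInf _).mp hv ⟨A, hA⟩
      rw [Module.End.mem_eigenspace_iff] at this
      exact this
    obtain ⟨b, hbS, hbspan, hbli⟩ := exists_linearIndependent ℂ S
    rw [hspan] at hbspan
    let B₀ : Module.Basis b ℂ V := Module.Basis.mk hbli (by rw [Subtype.range_coe]; exact hbspan.ge)
    haveI : Fintype b := FiniteDimensional.fintypeBasisIndex B₀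
    have hcard : Fintype.card b = Module.finrank ℂ V :=
      (Module.finrank_eq_card_basis B₀).symm
    let e : b ≃ Fin (Module.finrank ℂ V) := Fintype.equivFinOfCardEq hcard
    refine ⟨B₀.reindex e, fun q A hA => ?_⟩
    have hBq : (B₀.reindex e) q = (e.symm q : V) := by
      rw [Module.Basis.reindex_apply, Module.Basis.mk_apply]
    rw [hBq]
    exact hbS (e.symm q).2 A hA
  · rintro ⟨B, hB⟩
    haveI : IsReduced 𝒜 := by
      constructor
      rintro ⟨A, hA⟩ ⟨n, hn⟩
      have hn' : A ^ n = 0 := congrArg Subtype.val hn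
      ext1
      refine B.ext fun q => ?_
      obtain ⟨c, hc⟩ := hB q A hA
      have hev : A.HasEigenvector c (B q) :=
        ⟨Module.End.mem_eigenspace_iff.mpr hc, B.ne_zero q⟩
      have hpow : (A ^ n) (B q) = c ^ n • B q := hev.pow_apply n
      rw [hn'] at hpow
      have hcn : c ^ n = 0 := by
        have := hpow.symm
        rw [LinearMap.zero_apply] at this
        rcases smul_eq_zero.mp this with h | h
        · exact h
        · exact absurd h (B.ne_zero q)
      have hc0 : c = 0 := (pow_eq_zero_iff'.mp hcn).1
      simp [hc, hc0]
    haveI : IsArtinianRing 𝒜 := isArtinian_of_tower ℂ inferInstance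
    exact IsArtinianRing.isSemisimpleRing_of_isReduced 𝒜
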